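/- arXiv:2302.09037 — 3 statements merged into one kernel-verified Lean document; each statement's English description precedes it below -/
import Mathlib

section
/- Let M be a smooth manifold, ω' a closed 2-form and τ' a closed 1-form on M, and let pr: ℝ × M → M the projection and u the coordinate on ℝ. Then (M, τ', ω') is a cosymplectic manifold if and only if (ℝ × M, ω̃ = pr*ω' + du ∧ pr*τ') is a symplectic manifold. -/
/-- Let `M` be a smooth manifold with a 2-form `ω'` and a 1-form
`τ'` (both closed; encoded fiberwise with `ω' x` alternating), and consider on
`ℝ × M` the 2-form `ω̃ = pr*ω' + du ∧ pr*τ'`, i.e. fiberwise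
`ω̃((a,v),(b,w)) = ω'(v,w) + a τ'(w) − b τ'(v)`. Then `(M, τ', ω')` is a
cosymplectic manifold (i.e. `τ' x ≠ 0` and `ker τ'_x ⊕ ker ω'_x = T_x M` at every
point) if and only if `(ℝ × M, ω̃)` is a symplectic manifold (i.e. `ω̃` is
nondegenerate at every point). -/
theorem cosymplectic_iff_product_symplectic
    {M V : Type*} [AddCommGroup V] [Module ℝ V] [FiniteDimensional ℝ V]
    (ω : M → V →ₗ[ℝ] V →ₗ[ℝ] ℝ) (τ : M → V →ₗ[ℝ] ℝ)
    (halt : ∀ x v, ω x v v = 0) :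
    (∀ x, τ x ≠ 0 ∧ IsCompl (LinearMap.ker (τ x)) (LinearMap.ker (ω x)))
      ↔ (∀ (x : M) (p : ℝ × V),
          (∀ q : ℝ × V, ω x p.2 q.2 + p.1 * τ x q.2 - q.1 * τ x p.2 = 0)
            → p = 0) := by
  have hskew : ∀ x v w, ω x v w = - ω x w v := by
    intro x v w
    have h := halt x (v + w)
    simp only [map_add, LinearMap.add_apply, halt x v, halt x w] at h
    linarith
  constructor
  · rintro h x ⟨a, v⟩ hp
    obtain ⟨hτ, hc⟩ := h x
    have hτv : τ x v = 0 := by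
      have := hp (1, 0)
      simpa using this
    have heq : ∀ w, ω x v w + a * τ x w = 0 := by
      intro w
      have := hp (0, w)
      simpa [hτv] using this
    have hex : ∃ w, ω x w = 0 ∧ τ x w ≠ 0 := by
      by_contra hno
      push_neg at hno
      apply hτ
      ext u
      have hu : u ∈ LinearMap.ker (τ x) ⊔ LinearMap.ker (ω x) := by
        rw [hc.sup_eq_top]; trivial
      obtain ⟨u1, hu1, u2, hu2, rfl⟩ := Submodule.mem_sup.mp hu
      simp [LinearMap.mem_ker.mp hu1, hno u2 (LinearMap.mem_ker.mp hu2)]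
    obtain ⟨w, hw, hτw⟩ := hex
    have hvw : ω x v w = 0 := by rw [hskew x v w, hw]; simp
    have ha : a = 0 := by
      have := heq w
      rw [hvw] at this
      have : a * τ x w = 0 := by linarith
      exact (mul_eq_zero.mp this).resolve_right hτw
    have hvker : v ∈ LinearMap.ker (ω x) := by
      rw [LinearMap.mem_ker]
      ext w'
      have := heq w'
      rw [ha] at this
      simpa using this
    have hv0 : v = 0 := by
      have := hc.disjoint
      rw [Submodule.disjoint_def] at this
      exact this v (LinearMap.mem_ker.mpr hτv) hvker
    simp [Prod.ext_iff, ha, hv0]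
  · intro h x
    refine ⟨?_, ?_⟩
    · intro hτ0
      have := h x (1, 0) (fun q => by simp [hτ0])
      simp [Prod.ext_iff] at this
    · constructor
      · rw [Submodule.disjoint_def]
        intro v hv1 hv2
        have := h x (0, v) (fun q => by
          simp [LinearMap.mem_ker.mp hv1, LinearMap.mem_ker.mp hv2])
        simpa [Prod.ext_iff] using this
      · by_cases hex : ∃ w, ω x w = 0 ∧ τ x w ≠ 0
        · obtain ⟨w, hw, hτw⟩ := hex
          rw [codisjoint_iff, eq_top_iff]
          intro u _
          refine Submodule.mem_sup.mpr
            ⟨u - (τ x u / τ x w) • w, ?_, (τ x u / τ x w) • w, ?_, by abel⟩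
          · rw [LinearMap.mem_ker]
            simp [mul_comm]
            field_simp
            simp
          · rw [LinearMap.mem_ker]
            simp [hw]
        · push_neg at hex
          exfalso
          -- τ vanishes on ker ω, so τ ∈ dualAnnihilator (ker ω) = range (ω x)
          have hle : LinearMap.range (ω x) ≤ (LinearMap.ker (ω x)).dualAnnihilator := by
            rintro φ ⟨v, rfl⟩
            rw [Submodule.mem_dualAnnihilator]
            intro w hw
            rw [hskew x v w, LinearMap.mem_ker.mp hw]
            simp
          have heq : LinearMap.range (ω x) = (LinearMap.ker (ω x)).dualAnnihilator := by
            apply Submodule.eq_of_le_of_finrank_le hle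
            have h1 := LinearMap.finrank_range_add_finrank_ker (ω x)
            have h2 : Module.finrank ℝ (LinearMap.ker (ω x)).dualAnnihilator
                = Module.finrank ℝ (V ⧸ LinearMap.ker (ω x)) :=
              (LinearEquiv.finrank_eq (Subspace.quotEquivAnnihilator (LinearMap.ker (ω x)))).symm
            have h3 := Submodule.finrank_quotient_add_finrank (LinearMap.ker (ω x))
            linarith
          have hτmem : τ x ∈ (LinearMap.ker (ω x)).dualAnnihilator := by
            rw [Submodule.mem_dualAnnihilator]
            intro w hw
            exact hex w (LinearMap.mem_ker.mp hw)
          rw [← heq] at hτmem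
          obtain ⟨v₀, hv₀⟩ := hτmem
          have := h x (1, -v₀) (fun q => by
            have h1 : τ x v₀ = 0 := by rw [← hv₀]; exact halt x v₀
            have h2 : ω x v₀ q.2 = τ x q.2 := by rw [← hv₀]
            simp [h1, h2])
          simp [Prod.ext_iff] at this
end

section
/- Let (M, τ, ω) be a k-polycosymplectic manifold and define ω̃ = pr_M*ω + du ∧̄ pr_M*τ on ℝᵏ × M, where ∧̄ is the componentwise exterior product, du = du^α ⊗ e_α, and pr_M: ℝᵏ × M → M is the projection. Then ω̃ is a k-polysymplectic form, i.e. it is closed and ∩_{α=1}^k ker ω̃^α = 0. -/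
/-- Let `(M, τ, ω)` be a `k`-polycosymplectic manifold (encoded
fiberwise: components `τ^α = τ x α`, `ω^α = ω x α`, the distribution
`⋂_α ker ω^α` has rank `k`, and `(⋂_α ker ω^α) ∩ (⋂_α ker τ^α) = 0`), and define
on `ℝᵏ × M` the `ℝᵏ`-valued 2-form `ω̃ = pr_M*ω + du ∧̄ pr_M*τ`, i.e.
componentwise and fiberwise
`ω̃^α((a,v),(b,w)) = ω^α(v,w) + a^α τ^α(w) − b^α τ^α(v)`. Then `ω̃` is a
`k`-polysymplectic form: (closedness being automatic from that of `τ` and `ω`)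
it is nondegenerate, `⋂_{α=1}^k ker ω̃^α = 0` at every point. -/
theorem polycosymplectic_extension_polysymplectic
    {M V : Type*} [AddCommGroup V] [Module ℝ V] [FiniteDimensional ℝ V] {k : ℕ}
    (ω : M → Fin k → V →ₗ[ℝ] V →ₗ[ℝ] ℝ) (τ : M → Fin k → V →ₗ[ℝ] ℝ)
    (halt : ∀ x α v, ω x α v v = 0)
    (hrank : ∀ x, Module.finrank ℝ ↥(⨅ α, LinearMap.ker (ω x α)) = k)
    (hker : ∀ x, (⨅ α, LinearMap.ker (ω x α)) ⊓ (⨅ α, LinearMap.ker (τ x α)) = ⊥) :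
    ∀ (x : M) (p : (Fin k → ℝ) × V),
      (∀ (α : Fin k) (q : (Fin k → ℝ) × V),
        ω x α p.2 q.2 + p.1 α * τ x α q.2 - q.1 α * τ x α p.2 = 0) → p = 0 := by
  intro x p hp
  -- antisymmetry
  have hskew : ∀ α u v, ω x α u v = - ω x α v u := by
    intro α u v
    have h := halt x α (u + v)
    simp only [map_add, LinearMap.add_apply, halt x α u, halt x α v] at h
    linarith
  -- τ x α p.2 = 0 for all α
  have hτp : ∀ α, τ x α p.2 = 0 := by
    intro α
    have h := hp α (Pi.single α 1, 0)
    simpa using h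
  -- basic relation with q = (0, w)
  have hrel : ∀ α w, ω x α p.2 w + p.1 α * τ x α w = 0 := by
    intro α w
    have h := hp α (0, w)
    simpa using h
  set K := ⨅ α, LinearMap.ker (ω x α) with hK
  -- the map K → ℝᵏ given by τ is injective, hence surjective (equal finrank)
  set φ : K →ₗ[ℝ] (Fin k → ℝ) :=
    LinearMap.pi (fun α => (τ x α).comp K.subtype) with hφ
  have hinj : Function.Injective φ := by
    rw [← LinearMap.ker_eq_bot]
    ext ⟨v, hv⟩
    simp only [LinearMap.mem_ker, Submodule.mem_bot, hφ, LinearMap.pi_apply,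
      LinearMap.comp_apply, Submodule.subtype_apply, funext_iff, Pi.zero_apply]
    constructor
    · intro h
      have : v ∈ (⨅ α, LinearMap.ker (ω x α)) ⊓ (⨅ α, LinearMap.ker (τ x α)) := by
        rw [Submodule.mem_inf]
        refine ⟨hv, ?_⟩
        rw [Submodule.mem_iInf]
        exact h
      rw [hker x] at this
      simpa [Subtype.ext_iff] using this
    · intro h α
      have hv0 : v = 0 := by simpa using congrArg Subtype.val h
      simp [hv0]
  have hsurj : Function.Surjective φ := by
    have h1 : Module.finrank ℝ K = Module.finrank ℝ (Fin k → ℝ) := by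
      rw [hrank x, Module.finrank_fin_fun]
    exact (LinearMap.injective_iff_surjective_of_finrank_eq_finrank h1).mp hinj
  -- p.1 = 0
  have hp1 : p.1 = 0 := by
    funext α
    obtain ⟨⟨w, hw⟩, hwτ⟩ := hsurj (Pi.single α 1)
    have hwα : τ x α w = 1 := by
      have := congrFun hwτ α
      simpa [hφ] using this
    have hωw : ω x α p.2 w = 0 := by
      rw [hskew]
      have : w ∈ LinearMap.ker (ω x α) := (Submodule.mem_iInf _).mp hw α
      simp [LinearMap.mem_ker.mp this]
    have := hrel α w
    rw [hωw, hwα] at this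
    simpa using this
  -- p.2 ∈ K ⊓ ⨅ ker τ
  have hp2 : p.2 ∈ (⨅ α, LinearMap.ker (ω x α)) ⊓ (⨅ α, LinearMap.ker (τ x α)) := by
    rw [Submodule.mem_inf]
    constructor
    · simp only [Submodule.mem_iInf, LinearMap.mem_ker]
      intro α
      ext w
      have := hrel α w
      rw [hp1] at this
      simpa using this
    · simp only [Submodule.mem_iInf, LinearMap.mem_ker]
      exact hτp
  rw [hker x] at hp2
  have : p.2 = 0 := by simpa using hp2
  exact Prod.ext hp1 this
end

section
/- Let (M, τ, ω) be a k-polycosymplectic manifold with Reeb vector fields R₁,…,R_k, let h ∈ C^∞(M), and let X^h = (X₁,…,X_k) be a k-polycosymplectic Hamiltonian k-vector field for h (so ι_{X^h}ω := Σ_α ι_{X_α}ω^α = dh − (R_α h)τ^α and τ^β(X_α) = δ^β_α). Define on ℝᵏ × M the function h̃(u, x) = h(x) − Σ_α u^α and the k-vector field X^{h̃} = X^h + (R_α h)∂/∂u^α. Then ι_{X^{h̃}} ω̃ = dh̃, where ω̃ = pr_M*ω + du ∧̄ pr_M*τ is the associated k-polysymplectic form on ℝᵏ × M. -/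
/-- Let `(M, τ, ω)` be a `k`-polycosymplectic manifold with Reeb
vector fields `R₁,…,R_k`, `h` a smooth function, and `X^h = (X₁,…,X_k)` a
`k`-polycosymplectic Hamiltonian `k`-vector field for `h`, i.e.
`∑_α ι_{X_α} ω^α = dh − ∑_α (R_α h) τ^α` and `τ^β(X_α) = δ^β_α`. On `ℝᵏ × M`
define `h̃(u,x) = h(x) − ∑_α u^α` and `X̃_α = X_α + (R_α h) ∂/∂u^α`. Then
`ι_{X^{h̃}} ω̃ = dh̃` for `ω̃ = pr_M*ω + du ∧̄ pr_M*τ`. Encoded fiberwise at a point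
`x`: tangent vectors of `ℝᵏ × M` are pairs `(a, v)`, the lifted vector field is
`X̃_α = (Pi.single α (dh(r α)), X α)`, `ω̃^α((a,v),(b,w)) = ω^α(v,w) + a^α τ^α(w)
− b^α τ^α(v)`, and `dh̃(b,w) = dh(w) − ∑_α b^α`; the claim is the equality of both
sides evaluated on every tangent vector `(b, w)`. -/
theorem extended_hamiltonian_k_vector_field
    {V : Type*} [AddCommGroup V] [Module ℝ V] {k : ℕ}
    (ω : Fin k → V →ₗ[ℝ] V →ₗ[ℝ] ℝ) (τ : Fin k → V →ₗ[ℝ] ℝ)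
    (dh : V →ₗ[ℝ] ℝ) (r : Fin k → V) (X : Fin k → V)
    (hrτ : ∀ α β, τ β (r α) = if β = α then 1 else 0)
    (hrω : ∀ α β, ω β (r α) = 0)
    (hX : ∑ α, ω α (X α) = dh - ∑ α, dh (r α) • τ α)
    (hτX : ∀ α β, τ β (X α) = if β = α then 1 else 0) :
    ∀ (b : Fin k → ℝ) (w : V),
      ∑ α, (ω α (X α) w + dh (r α) * τ α w - b α * τ α (X α))
        = dh w - ∑ α, b α := by
  intro b w
  have h1 : ∑ α, (ω α (X α)) w = dh w - ∑ α, dh (r α) * (τ α) w := by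
    have := congrFun (congrArg (fun f => (f : V →ₗ[ℝ] ℝ).toFun) hX) w
    simpa [Finset.sum_apply, LinearMap.coe_sum] using this
  simp only [hτX, if_pos rfl, mul_one]
  rw [Finset.sum_sub_distrib, Finset.sum_add_distrib, h1]
  simp
end
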